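/- arXiv:2410.15354 — 4 statements merged into one kernel-verified Lean document; each statement's English description precedes it below -/
import Mathlib

section
/- The vector field X=(P,Q) with P(x,y) = (4x²−1)(y + a·y²) and Q(x,y) = (4y²−1)(−x + b·x²), for any real constants a, b, has integrating factor R(x,y) = 1/((4x²−1)(4y²−1)) on the open square Δ = (−1/2,1/2)²; i.e., ∂(PR)/∂x + ∂(QR)/∂y = 0 on Δ. -/
private lemma aux1 (c d x : ℝ) (hx : 4*x^2-1 ≠ 0) :
    deriv (fun s : ℝ => (4*s^2-1)*c*(1/((4*s^2-1)*d))) x = 0 := by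
  have hev : ∀ᶠ s in nhds x, (4:ℝ)*s^2-1 ≠ 0 :=
    (Continuous.continuousAt (by continuity : Continuous fun s:ℝ => 4*s^2-1)).eventually_ne hx
  have h : (fun s : ℝ => (4*s^2-1)*c*(1/((4*s^2-1)*d))) =ᶠ[nhds x] fun _ => c*(1/d) := by
    filter_upwards [hev] with s hs
    rcases eq_or_ne d 0 with hd | hd
    · simp [hd]
    · field_simp
  rw [h.deriv_eq]; simp

private lemma aux2 (c d x : ℝ) (hx : 4*x^2-1 ≠ 0) :
    deriv (fun s : ℝ => (4*s^2-1)*c*(1/(d*(4*s^2-1)))) x = 0 := by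
  have : (fun s : ℝ => (4*s^2-1)*c*(1/(d*(4*s^2-1)))) =
      fun s : ℝ => (4*s^2-1)*c*(1/((4*s^2-1)*d)) := by
    funext s; rw [mul_comm d]
  rw [this]; exact aux1 c d x hx

/-- The vector field `P(x,y) = (4x²-1)(y + a y²)`, `Q(x,y) = (4y²-1)(-x + b x²)`
has integrating factor `R(x,y) = 1/((4x²-1)(4y²-1))` on the open square
`Δ = (-1/2,1/2)²`: `∂(PR)/∂x + ∂(QR)/∂y = 0` on `Δ`. -/
theorem stmt9 (a b : ℝ) :
    ∀ x y : ℝ, -(1/2) < x → x < 1/2 → -(1/2) < y → y < 1/2 →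
      deriv (fun s : ℝ =>
          (4 * s ^ 2 - 1) * (y + a * y ^ 2) *
            (1 / ((4 * s ^ 2 - 1) * (4 * y ^ 2 - 1)))) x +
        deriv (fun s : ℝ =>
          (4 * s ^ 2 - 1) * (-x + b * x ^ 2) *
            (1 / ((4 * x ^ 2 - 1) * (4 * s ^ 2 - 1)))) y = 0 := by
  intro x y hx1 hx2 hy1 hy2
  have hx : 4*x^2-1 ≠ 0 := by nlinarith
  have hy : 4*y^2-1 ≠ 0 := by nlinarith
  rw [aux1 (y + a*y^2) (4*y^2-1) x hx, aux2 (-x + b*x^2) (4*x^2-1) y hy]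
  norm_num
end

section
/- The vector field X=(P,Q) with P(x,y) = (4x²−1)(y + a·xy + b·y²) and Q(x,y) = (4y²−1)(−x − a·x² − b·xy), for real constants a, b, admits the integrating factor R(x,y) = 1/(a·x + b·y + 1) on a neighborhood of the origin; i.e., ∂(PR)/∂x + ∂(QR)/∂y = 0 wherever a·x + b·y + 1 ≠ 0. -/
/-- The vector field `P(x,y) = (4x²-1)(y + a xy + b y²)`,
`Q(x,y) = (4y²-1)(-x - a x² - b xy)` admits the integrating factor
`R(x,y) = 1/(a x + b y + 1)` wherever `a x + b y + 1 ≠ 0`: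
`∂(PR)/∂x + ∂(QR)/∂y = 0` there. -/
theorem stmt10 (a b : ℝ) :
    ∀ x y : ℝ, a * x + b * y + 1 ≠ 0 →
      deriv (fun s : ℝ =>
          (4 * s ^ 2 - 1) * (y + a * s * y + b * y ^ 2) *
            (1 / (a * s + b * y + 1))) x +
        deriv (fun s : ℝ =>
          (4 * s ^ 2 - 1) * (-x - a * x ^ 2 - b * x * s) *
            (1 / (a * x + b * s + 1))) y = 0 := by
  intro x y h
  have hc1 : ContinuousAt (fun s : ℝ => a * s + b * y + 1) x := by fun_prop
  have hc2 : ContinuousAt (fun s : ℝ => a * x + b * s + 1) y := by fun_prop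
  have he1 : (fun s : ℝ =>
      (4 * s ^ 2 - 1) * (y + a * s * y + b * y ^ 2) * (1 / (a * s + b * y + 1)))
      =ᶠ[nhds x] fun s : ℝ => (4 * s ^ 2 - 1) * y := by
    filter_upwards [hc1.eventually_ne h] with s hs
    field_simp
    rw [div_eq_iff (by intro h0; apply hs; linear_combination h0)]
    ring
  have he2 : (fun s : ℝ =>
      (4 * s ^ 2 - 1) * (-x - a * x ^ 2 - b * x * s) * (1 / (a * x + b * s + 1)))
      =ᶠ[nhds y] fun s : ℝ => (4 * s ^ 2 - 1) * (-x) := by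
    filter_upwards [hc2.eventually_ne h] with s hs
    field_simp
    rw [div_eq_iff (by intro h0; apply hs; linear_combination h0)]
    ring
  rw [he1.deriv_eq, he2.deriv_eq]
  have d1 : HasDerivAt (fun s : ℝ => (4 * s ^ 2 - 1) * y) (8 * x * y) x := by
    have := ((hasDerivAt_pow 2 x).const_mul 4).sub_const 1 |>.mul_const y
    convert this using 1
    · rfl
    · rfl
    ring
  have d2 : HasDerivAt (fun s : ℝ => (4 * s ^ 2 - 1) * (-x)) (8 * y * (-x)) y := by
    have := ((hasDerivAt_pow 2 y).const_mul 4).sub_const 1 |>.mul_const (-x)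
    convert this using 1
    · rfl
    · rfl
    ring
  rw [d1.deriv, d2.deriv]
  ring
end

section
/- The vector field X=(P,Q) with P(x,y) = (4x²−1)(y + a·x² + b·xy + a·y²) and Q(x,y) = (4y²−1)(−x + c·x² − 2a·xy + c·y²), where b = −2c (i.e., condition D₇: a₂₀=a₀₂=−b₁₁/2 and b₂₀=b₀₂=−a₁₁/2), admits the integrating factor R(x,y)=1/((4x²−1)²(4y²−1)²) on Δ=(−1/2,1/2)²: ∂(PR)/∂x + ∂(QR)/∂y = 0 on Δ. -/
/-- The vector field of center condition `D₇`:
`P(x,y) = (4x²-1)(y - (b/2)x² + a xy - (b/2)y²)`,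
`Q(x,y) = (4y²-1)(-x - (a/2)x² + b xy - (a/2)y²)`, admits the integrating
factor `R(x,y) = 1/((4x²-1)²(4y²-1)²)` on `Δ = (-1/2,1/2)²`:
`∂(PR)/∂x + ∂(QR)/∂y = 0` on `Δ`. -/
theorem stmt11 (a b : ℝ) :
    ∀ x y : ℝ, -(1/2) < x → x < 1/2 → -(1/2) < y → y < 1/2 →
      deriv (fun s : ℝ =>
          (4 * s ^ 2 - 1) * (y - (b / 2) * s ^ 2 + a * s * y - (b / 2) * y ^ 2) *
            (1 / ((4 * s ^ 2 - 1) ^ 2 * (4 * y ^ 2 - 1) ^ 2))) x +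
        deriv (fun s : ℝ =>
          (4 * s ^ 2 - 1) * (-x - (a / 2) * x ^ 2 + b * x * s - (a / 2) * s ^ 2) *
            (1 / ((4 * x ^ 2 - 1) ^ 2 * (4 * s ^ 2 - 1) ^ 2))) y = 0 := by
  intro x y hx1 hx2 hy1 hy2
  have hx : (4 * x ^ 2 - 1) ≠ 0 := by nlinarith
  have hy : (4 * y ^ 2 - 1) ≠ 0 := by nlinarith
  have hQx : (4 * x ^ 2 - 1) ^ 2 * (4 * y ^ 2 - 1) ^ 2 ≠ 0 := by positivity
  -- first derivative
  have hq1 : HasDerivAt (fun s : ℝ => 4 * s ^ 2 - 1) (8 * x) x := by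
    have h := ((hasDerivAt_pow 2 x).const_mul (4:ℝ)).sub_const 1
    exact h.congr_deriv (by norm_num; ring)
  have hq2 : HasDerivAt (fun s : ℝ => 4 * s ^ 2 - 1) (8 * y) y := by
    have h := ((hasDerivAt_pow 2 y).const_mul (4:ℝ)).sub_const 1
    exact h.congr_deriv (by norm_num; ring)
  have hP1 : HasDerivAt
      (fun s : ℝ => (4 * s ^ 2 - 1) * (y - (b / 2) * s ^ 2 + a * s * y - (b / 2) * y ^ 2))
      ((8 * x) * (y - (b / 2) * x ^ 2 + a * x * y - (b / 2) * y ^ 2) +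
        (4 * x ^ 2 - 1) * (-(b * x) + a * y)) x := by
    have h2 : HasDerivAt (fun s : ℝ => y - (b / 2) * s ^ 2 + a * s * y - (b / 2) * y ^ 2)
        (-(b * x) + a * y) x := by
      have := (((hasDerivAt_const x y).sub ((hasDerivAt_pow 2 x).const_mul (b / 2))).add
        (((hasDerivAt_id x).const_mul a).mul_const y)).sub_const ((b / 2) * y ^ 2)
      exact this.congr_deriv (by norm_num; ring)
    exact hq1.mul h2
  have hQ1 : HasDerivAt (fun s : ℝ => (4 * s ^ 2 - 1) ^ 2 * (4 * y ^ 2 - 1) ^ 2)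
      ((2 * (4 * x ^ 2 - 1) ^ 1 * (8 * x)) * (4 * y ^ 2 - 1) ^ 2) x :=
    (hq1.pow 2).mul_const _
  have hD1 : HasDerivAt (fun s : ℝ =>
      (4 * s ^ 2 - 1) * (y - (b / 2) * s ^ 2 + a * s * y - (b / 2) * y ^ 2) *
        (1 / ((4 * s ^ 2 - 1) ^ 2 * (4 * y ^ 2 - 1) ^ 2)))
      ((((8 * x) * (y - (b / 2) * x ^ 2 + a * x * y - (b / 2) * y ^ 2) +
          (4 * x ^ 2 - 1) * (-(b * x) + a * y)) *
        ((4 * x ^ 2 - 1) ^ 2 * (4 * y ^ 2 - 1) ^ 2) -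
        (4 * x ^ 2 - 1) * (y - (b / 2) * x ^ 2 + a * x * y - (b / 2) * y ^ 2) *
          ((2 * (4 * x ^ 2 - 1) ^ 1 * (8 * x)) * (4 * y ^ 2 - 1) ^ 2)) /
        ((4 * x ^ 2 - 1) ^ 2 * (4 * y ^ 2 - 1) ^ 2) ^ 2) x := by
    have := hP1.div hQ1 hQx
    simpa [div_eq_mul_inv, one_div, Pi.mul_def] using this
  -- second derivative
  have hP2 : HasDerivAt
      (fun s : ℝ => (4 * s ^ 2 - 1) * (-x - (a / 2) * x ^ 2 + b * x * s - (a / 2) * s ^ 2))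
      ((8 * y) * (-x - (a / 2) * x ^ 2 + b * x * y - (a / 2) * y ^ 2) +
        (4 * y ^ 2 - 1) * (b * x - a * y)) y := by
    have h2 : HasDerivAt (fun s : ℝ => -x - (a / 2) * x ^ 2 + b * x * s - (a / 2) * s ^ 2)
        (b * x - a * y) y := by
      have := (((hasDerivAt_const y (-x - (a / 2) * x ^ 2)).add
        ((hasDerivAt_id y).const_mul (b * x))).sub
        ((hasDerivAt_pow 2 y).const_mul (a / 2)))
      simp only [id_eq, pow_one, Nat.cast_ofNat] at this
      exact this.congr_deriv (by norm_num; ring)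
    exact hq2.mul h2
  have hQ2 : HasDerivAt (fun s : ℝ => (4 * x ^ 2 - 1) ^ 2 * (4 * s ^ 2 - 1) ^ 2)
      ((4 * x ^ 2 - 1) ^ 2 * (2 * (4 * y ^ 2 - 1) ^ 1 * (8 * y))) y :=
    (hq2.pow 2).const_mul _
  have hD2 : HasDerivAt (fun s : ℝ =>
      (4 * s ^ 2 - 1) * (-x - (a / 2) * x ^ 2 + b * x * s - (a / 2) * s ^ 2) *
        (1 / ((4 * x ^ 2 - 1) ^ 2 * (4 * s ^ 2 - 1) ^ 2)))
      ((((8 * y) * (-x - (a / 2) * x ^ 2 + b * x * y - (a / 2) * y ^ 2) +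
          (4 * y ^ 2 - 1) * (b * x - a * y)) *
        ((4 * x ^ 2 - 1) ^ 2 * (4 * y ^ 2 - 1) ^ 2) -
        (4 * y ^ 2 - 1) * (-x - (a / 2) * x ^ 2 + b * x * y - (a / 2) * y ^ 2) *
          ((4 * x ^ 2 - 1) ^ 2 * (2 * (4 * y ^ 2 - 1) ^ 1 * (8 * y)))) /
        ((4 * x ^ 2 - 1) ^ 2 * (4 * y ^ 2 - 1) ^ 2) ^ 2) y := by
    have := hP2.div hQ2 hQx
    simpa [div_eq_mul_inv, one_div, Pi.mul_def] using this
  rw [hD1.deriv, hD2.deriv]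
  field_simp
  ring
end

section
/- Suppose a planar C¹ vector field X has two nondegenerate singularities p ≠ q lying on a line ℓ with unit normal n, and suppose ⟨X(w), n⟩ ≠ 0 for all w on the open segment between p and q. If closed orbits surround p with counterclockwise orientation in a punctured neighborhood of p, and closed orbits surround q in a punctured neighborhood of q, then the orbits around q are oriented clockwise; more precisely, the sign of ⟨X(w), n⟩ for w on the segment near p is determined by the rotation direction at p, forcing opposite rotation directions at p and q. -/
/-- The planar cross product `u × v = u₁v₂ - u₂v₁`. -/
def cross2 (u v : ℝ × ℝ) : ℝ := u.1 * v.2 - u.2 * v.1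

/-- `γ` is a periodic solution of the vector field `X` with period `T`. -/
def IsPeriodicOrbit (X : ℝ × ℝ → ℝ × ℝ) (γ : ℝ → ℝ × ℝ) (T : ℝ) : Prop :=
  0 < T ∧ (∀ t : ℝ, HasDerivAt γ (X (γ t)) t) ∧ (∀ t : ℝ, γ (t + T) = γ t)

/-- The determinant of the Jacobian of `X` at `p`. -/
noncomputable def jacDet2 (X : ℝ × ℝ → ℝ × ℝ) (p : ℝ × ℝ) : ℝ :=
  (fderiv ℝ X p (1, 0)).1 * (fderiv ℝ X p (0, 1)).2 -
    (fderiv ℝ X p (0, 1)).1 * (fderiv ℝ X p (1, 0)).2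

lemma clm_coords (A : ℝ × ℝ →L[ℝ] ℝ × ℝ) (v : ℝ × ℝ) :
    A v = (v.1 * (A (1,0)).1 + v.2 * (A (0,1)).1,
           v.1 * (A (1,0)).2 + v.2 * (A (0,1)).2) := by
  have h : v = v.1 • ((1:ℝ),(0:ℝ)) + v.2 • ((0:ℝ),(1:ℝ)) := by
    ext <;> simp
  conv_lhs => rw [h]
  rw [map_add, map_smul, map_smul]
  ext <;> simp [mul_comm]

lemma remainder_small (X : ℝ × ℝ → ℝ × ℝ) (hX : ContDiff ℝ 1 X) (z : ℝ × ℝ)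
    (hz : X z = 0) {η : ℝ} (hη : 0 < η) :
    ∃ δ > 0, ∀ w : ℝ × ℝ, dist w z < δ →
      ‖X w - fderiv ℝ X z (w - z)‖ ≤ η * ‖w - z‖ := by
  have hd : HasFDerivAt X (fderiv ℝ X z) z :=
    (hX.differentiable one_ne_zero z).hasFDerivAt
  have h2 := hd.isLittleO.def hη
  rw [Metric.eventually_nhds_iff] at h2
  obtain ⟨δ, hδ, H⟩ := h2
  exact ⟨δ, hδ, fun w hw => by simpa [hz] using H hw⟩

lemma abs_le_bound {A B C D : ℝ} (h1 : |A| ≤ C) (h2 : |B| ≤ D) : |A * B| ≤ C * D := by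
  rw [abs_mul]
  exact mul_le_mul h1 h2 (abs_nonneg _) ((abs_nonneg A).trans h1)


lemma lyap_sign {τ δ S N Dt E : ℝ} (hτ : τ ≠ 0) (hδ : 0 < δ) (hN : 0 < N)
    (hS : N^2 ≤ S) (hE : |E| ≤ |τ| * δ / 2 * N^2) (hD : Dt = 2*τ*δ*S + E) :
    0 < Dt * τ := by
  rcases lt_or_gt_of_ne hτ with h | h
  · rw [abs_of_neg h] at hE
    have h1 : 2*τ*δ*S ≤ 2*τ*δ*N^2 := by
      nlinarith [mul_nonneg (sub_nonneg.2 hS) (mul_nonneg (neg_nonneg.2 h.le) hδ.le)]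
    have h2 : Dt < 0 := by
      nlinarith [abs_le.1 hE, mul_pos (mul_pos (neg_pos.2 h) hδ) (mul_pos hN hN)]
    nlinarith [mul_pos (neg_pos.2 h) (neg_pos.2 h2)]
  · rw [abs_of_pos h] at hE
    have h1 : 2*τ*δ*N^2 ≤ 2*τ*δ*S := by
      nlinarith [mul_nonneg (sub_nonneg.2 hS) (mul_nonneg h.le hδ.le)]
    have h2 : 0 < Dt := by
      nlinarith [abs_le.1 hE, mul_pos (mul_pos h hδ) (mul_pos hN hN)]
    nlinarith [mul_pos h h2]

set_option maxHeartbeats 1600000 in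
lemma no_periodic (X : ℝ × ℝ → ℝ × ℝ) (hX : ContDiff ℝ 1 X) (z : ℝ × ℝ)
    (hz : X z = 0) (hdet : 0 < jacDet2 X z)
    (htr : (fderiv ℝ X z (1,0)).1 + (fderiv ℝ X z (0,1)).2 ≠ 0) :
    ∃ ε > (0:ℝ), ∀ (γ : ℝ → ℝ × ℝ) (T : ℝ), IsPeriodicOrbit X γ T →
      ¬ (Set.range γ ⊆ Metric.ball z ε \ {z}) := by
  set A := fderiv ℝ X z with hA
  set a := (A (1,0)).1 with ha
  set b := (A (0,1)).1 with hb
  set c := (A (1,0)).2 with hc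
  set d := (A (0,1)).2 with hd
  have hdet' : 0 < a * d - b * c := hdet
  have hτ : a + d ≠ 0 := htr
  have hτa : 0 < |a + d| := abs_pos.2 hτ
  set P11 := (a*d - b*c) + c^2 + d^2 with hP11
  set P12 := -(a*c + b*d) with hP12
  set P22 := (a*d - b*c) + a^2 + b^2 with hP22
  set K := |P11| + 2* |P12| + |P22| + 1 with hK
  have hK0 : 0 < K := by positivity
  set η := |a + d| * (a*d - b*c) / (4*K) with hηdef
  have hη0 : 0 < η := div_pos (mul_pos hτa hdet') (by positivity)
  obtain ⟨ε, hε, hRe⟩ := remainder_small X hX z hz hη0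
  refine ⟨ε, hε, ?_⟩
  rintro γ T ⟨hT, hγ', hper⟩ hsub
  -- component derivatives
  have hx : ∀ t : ℝ, HasDerivAt (fun s => (γ s).1 - z.1) ((X (γ t)).1) t := by
    intro t
    have h1 : HasDerivAt (fun s => (γ s).1) ((X (γ t)).1) t := by
      have := (ContinuousLinearMap.fst ℝ ℝ ℝ).hasFDerivAt.comp_hasDerivAt t (hγ' t)
      exact this
    exact h1.sub_const _
  have hy : ∀ t : ℝ, HasDerivAt (fun s => (γ s).2 - z.2) ((X (γ t)).2) t := by
    intro t
    have h1 : HasDerivAt (fun s => (γ s).2) ((X (γ t)).2) t := by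
      have := (ContinuousLinearMap.snd ℝ ℝ ℝ).hasFDerivAt.comp_hasDerivAt t (hγ' t)
      exact this
    exact h1.sub_const _
  -- the Lyapunov function
  set f : ℝ → ℝ := fun s => P11 * (((γ s).1 - z.1) * ((γ s).1 - z.1))
      + 2*P12 * (((γ s).1 - z.1) * ((γ s).2 - z.2))
      + P22 * (((γ s).2 - z.2) * ((γ s).2 - z.2)) with hf_def
  set D : ℝ → ℝ := fun t => 2*P11*((γ t).1 - z.1)*(X (γ t)).1
      + 2*P12*((X (γ t)).1*((γ t).2 - z.2) + ((γ t).1 - z.1)*(X (γ t)).2)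
      + 2*P22*((γ t).2 - z.2)*(X (γ t)).2 with hD_def
  have hf : ∀ t : ℝ, HasDerivAt f (D t) t := by
    intro t
    have h1 := ((hx t).mul (hx t)).const_mul P11
    have h2 := ((hx t).mul (hy t)).const_mul (2*P12)
    have h3 := ((hy t).mul (hy t)).const_mul P22
    have := (h1.add h2).add h3
    refine this.congr_deriv ?_
    simp only [hD_def]
    ring
  -- sign of D t
  have hDsign : ∀ t : ℝ, 0 < D t * (a + d) := by
    intro t
    have hmem : γ t ∈ Metric.ball z ε \ {z} := hsub (Set.mem_range_self t)
    have hne : γ t ≠ z := fun h => hmem.2 (by simp [h])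
    have hlt : dist (γ t) z < ε := hmem.1
    set x := (γ t).1 - z.1 with hxd
    set y := (γ t).2 - z.2 with hyd
    set X1 := (X (γ t)).1 with hX1
    set X2 := (X (γ t)).2 with hX2
    set N := ‖γ t - z‖ with hN
    have hN0 : 0 < N := by
      rw [hN, norm_pos_iff]
      exact sub_ne_zero.2 hne
    have hxN : |x| ≤ N := by
      have := norm_fst_le (γ t - z)
      simpa [Real.norm_eq_abs] using this
    have hyN : |y| ≤ N := by
      have := norm_snd_le (γ t - z)
      simpa [Real.norm_eq_abs] using this
    have hN2 : N^2 ≤ x^2 + y^2 := by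
      have hNval : N = max |x| |y| := by
        rw [hN, Prod.norm_def]
        simp [Real.norm_eq_abs, hxd, hyd]
      rcases le_total |x| |y| with h | h
      · rw [hNval, max_eq_right h, sq_abs]; nlinarith [sq_nonneg x]
      · rw [hNval, max_eq_left h, sq_abs]; nlinarith [sq_nonneg y]
    set R1 := X1 - (x*a + y*b) with hR1
    set R2 := X2 - (x*c + y*d) with hR2
    have hAv : A (γ t - z) = (x*a + y*b, x*c + y*d) := by
      rw [clm_coords A (γ t - z)]
      simp [hxd, hyd]
      exact ⟨rfl, rfl⟩
    have hRnorm : ‖X (γ t) - A (γ t - z)‖ ≤ η * N := hRe (γ t) hlt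
    have hRval : X (γ t) - A (γ t - z) = (R1, R2) := by
      rw [hAv]
      ext <;> simp [hR1, hR2, hX1, hX2]
    rw [hRval] at hRnorm
    have hR1N : |R1| ≤ η * N := by
      have h1 : ‖((R1, R2) : ℝ × ℝ).1‖ ≤ ‖((R1, R2) : ℝ × ℝ)‖ := norm_fst_le _
      simpa [Real.norm_eq_abs] using h1.trans hRnorm
    have hR2N : |R2| ≤ η * N := by
      have h1 : ‖((R1, R2) : ℝ × ℝ).2‖ ≤ ‖((R1, R2) : ℝ × ℝ)‖ := norm_snd_le _
      simpa [Real.norm_eq_abs] using h1.trans hRnorm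
    -- decomposition
    have key : D t = 2*(a+d)*(a*d-b*c)*(x^2+y^2)
        + (2*(P11*x+P12*y)*R1 + 2*(P12*x+P22*y)*R2) := by
      simp only [hD_def, hR1, hR2, hX1, hX2, hP11, hP12, hP22, hxd, hyd]
      ring
    -- bound the remainder
    have e1 : |P11*x+P12*y| ≤ (|P11|+|P12|)*N := by
      calc |P11*x+P12*y| ≤ |P11*x| + |P12*y| := abs_add_le _ _
        _ ≤ |P11| *N + |P12| *N :=
            add_le_add (abs_le_bound le_rfl hxN) (abs_le_bound le_rfl hyN)
        _ = (|P11|+|P12|)*N := by ring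
    have e2 : |P12*x+P22*y| ≤ (|P12|+|P22|)*N := by
      calc |P12*x+P22*y| ≤ |P12*x| + |P22*y| := abs_add_le _ _
        _ ≤ |P12| *N + |P22| *N :=
            add_le_add (abs_le_bound le_rfl hxN) (abs_le_bound le_rfl hyN)
        _ = (|P12|+|P22|)*N := by ring
    have hrem : |2*(P11*x+P12*y)*R1 + 2*(P12*x+P22*y)*R2|
        ≤ |a+d| *(a*d-b*c)/2 * N^2 := by
      have t1 : |2*(P11*x+P12*y)*R1| ≤ 2*((|P11|+|P12|)*N*(η*N)) := by
        have h0 : |(P11*x+P12*y)*R1| ≤ (|P11|+|P12|)*N*(η*N) := abs_le_bound e1 hR1N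
        calc |2*(P11*x+P12*y)*R1| = 2 * |(P11*x+P12*y)*R1| := by
              rw [mul_assoc, abs_mul]; simp
          _ ≤ 2*((|P11|+|P12|)*N*(η*N)) := by linarith
      have t2 : |2*(P12*x+P22*y)*R2| ≤ 2*((|P12|+|P22|)*N*(η*N)) := by
        have h0 : |(P12*x+P22*y)*R2| ≤ (|P12|+|P22|)*N*(η*N) := abs_le_bound e2 hR2N
        calc |2*(P12*x+P22*y)*R2| = 2 * |(P12*x+P22*y)*R2| := by
              rw [mul_assoc, abs_mul]; simp
          _ ≤ 2*((|P12|+|P22|)*N*(η*N)) := by linarith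
      have hsum := (abs_add_le (2*(P11*x+P12*y)*R1) (2*(P12*x+P22*y)*R2)).trans
        (add_le_add t1 t2)
      have hKη : 4*K*η = |a+d| *(a*d-b*c) := by
        rw [hηdef]; field_simp
      have heq : 2*((|P11|+|P12|)*N*(η*N)) + 2*((|P12|+|P22|)*N*(η*N))
          = 2*(K-1)*η*N^2 := by rw [hK]; ring
      have hle2 : 2*(K-1)*η*N^2 ≤ 2*K*η*N^2 := by
        nlinarith [mul_pos hη0 (mul_pos hN0 hN0)]
      have heq2 : 2*K*η*N^2 = |a+d| *(a*d-b*c)/2 * N^2 := by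
        rw [← hKη]; ring
      rw [heq] at hsum
      linarith
    -- conclude
    exact lyap_sign hτ hdet' hN0 hN2 hrem key
  -- monotonicity contradiction
  have hfeq : f T = f 0 := by
    have := hper 0
    rw [zero_add] at this
    simp [hf_def, this]
  rcases lt_or_gt_of_ne hτ with hneg | hpos
  · have hmono : StrictAnti f := by
      apply strictAnti_of_deriv_neg
      intro s
      rw [(hf s).deriv]
      have := hDsign s
      nlinarith
    exact absurd hfeq (ne_of_lt (hmono hT))
  · have hmono : StrictMono f := by
      apply strictMono_of_deriv_pos
      intro s
      rw [(hf s).deriv]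
      have := hDsign s
      nlinarith
    exact absurd hfeq (ne_of_gt (hmono hT))

set_option maxHeartbeats 1600000 in
lemma local_sign (X : ℝ × ℝ → ℝ × ℝ) (hX : ContDiff ℝ 1 X) (z : ℝ × ℝ)
    (hz : X z = 0) (hdet : 0 < jacDet2 X z)
    (htr : (fderiv ℝ X z (1,0)).1 + (fderiv ℝ X z (0,1)).2 = 0) :
    ∃ δ > (0:ℝ), ∀ w : ℝ × ℝ, dist w z < δ → w ≠ z →
      0 < cross2 (w - z) (X w) * (fderiv ℝ X z (1,0)).2 := by
  set A := fderiv ℝ X z with hA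
  set a := (A (1,0)).1 with ha
  set b := (A (0,1)).1 with hb
  set c := (A (1,0)).2 with hc
  set d := (A (0,1)).2 with hd
  have hdet' : 0 < a * d - b * c := hdet
  have hτ : a + d = 0 := htr
  have hc0 : c ≠ 0 := by
    intro h
    have hda : d = -a := by linarith
    rw [h, hda] at hdet'
    nlinarith [sq_nonneg a]
  have hc0' : 0 < |c| := abs_pos.2 hc0
  obtain ⟨m, hm0, key⟩ : ∃ m : ℝ, 0 < m ∧
      ∀ x y : ℝ, m * (x^2 + y^2) ≤ (c*x - a*y)^2 + (a*d - b*c)*y^2 := by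
    have hS0 : (0:ℝ) < c^2 + a^2 + (a*d - b*c) := by positivity
    refine ⟨c^2 * (a*d - b*c) / (c^2 + a^2 + (a*d - b*c)),
      div_pos (by positivity) hS0, ?_⟩
    intro x y
    rw [div_mul_eq_mul_div, div_le_iff₀ hS0]
    nlinarith [sq_nonneg (c^2*x - a*c*y), sq_nonneg (a*c*x - (a^2 + (a*d-b*c))*y)]
  obtain ⟨η, hη0, heq⟩ : ∃ η : ℝ, 0 < η ∧ 4*(|c| + 1)*η = m := by
    refine ⟨m / (4*(|c| + 1)), div_pos hm0 (by positivity), ?_⟩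
    field_simp
  obtain ⟨δ, hδ, hRe⟩ := remainder_small X hX z hz hη0
  refine ⟨δ, hδ, ?_⟩
  intro w hw hne
  set x := w.1 - z.1 with hxd
  set y := w.2 - z.2 with hyd
  set N := ‖w - z‖ with hN
  have hN0 : 0 < N := by
    rw [hN, norm_pos_iff]
    exact sub_ne_zero.2 hne
  have hxN : |x| ≤ N := by
    have := norm_fst_le (w - z)
    simpa [Real.norm_eq_abs] using this
  have hyN : |y| ≤ N := by
    have := norm_snd_le (w - z)
    simpa [Real.norm_eq_abs] using this
  have hN2 : N^2 ≤ x^2 + y^2 := by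
    have hNval : N = max |x| |y| := by
      rw [hN, Prod.norm_def]
      simp [Real.norm_eq_abs, hxd, hyd]
    rcases le_total |x| |y| with h | h
    · rw [hNval, max_eq_right h, sq_abs]; nlinarith [sq_nonneg x]
    · rw [hNval, max_eq_left h, sq_abs]; nlinarith [sq_nonneg y]
  set R1 := (X w).1 - (x*a + y*b) with hR1
  set R2 := (X w).2 - (x*c + y*d) with hR2
  have hAv : A (w - z) = (x*a + y*b, x*c + y*d) := by
    rw [clm_coords A (w - z)]
    simp [hxd, hyd]
    exact ⟨rfl, rfl⟩
  have hRnorm : ‖X w - A (w - z)‖ ≤ η * N := hRe w hw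
  have hRval : X w - A (w - z) = (R1, R2) := by
    rw [hAv]
    ext <;> simp [hR1, hR2]
  rw [hRval] at hRnorm
  have hR1N : |R1| ≤ η * N := by
    have h1 : ‖((R1, R2) : ℝ × ℝ).1‖ ≤ ‖((R1, R2) : ℝ × ℝ)‖ := norm_fst_le _
    simpa [Real.norm_eq_abs] using h1.trans hRnorm
  have hR2N : |R2| ≤ η * N := by
    have h1 : ‖((R1, R2) : ℝ × ℝ).2‖ ≤ ‖((R1, R2) : ℝ × ℝ)‖ := norm_snd_le _
    simpa [Real.norm_eq_abs] using h1.trans hRnorm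
  -- decomposition
  have hQ : cross2 (w - z) (X w) * c
      = ((c*x - a*y)^2 + (a*d - b*c)*y^2) + (x*R2 - y*R1)*c := by
    simp only [cross2, Prod.fst_sub, Prod.snd_sub, ← hxd, ← hyd]
    have e1 : (X w).1 = x*a + y*b + R1 := by rw [hR1]; ring
    have e2 : (X w).2 = x*c + y*d + R2 := by rw [hR2]; ring
    rw [e1, e2]
    linear_combination (c*x*y - a*y^2) * hτ
  -- bounds
  have h1 : m * N^2 ≤ (c*x - a*y)^2 + (a*d - b*c)*y^2 := by
    refine le_trans ?_ (key x y)
    nlinarith [mul_nonneg hm0.le (sub_nonneg.2 hN2)]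
  have hsub2 : |x*R2 - y*R1| ≤ 2*η*N^2 := by
    calc |x*R2 - y*R1| ≤ |x*R2| + |y*R1| := abs_sub _ _
      _ ≤ N*(η*N) + N*(η*N) :=
          add_le_add (abs_le_bound hxN hR2N) (abs_le_bound hyN hR1N)
      _ = 2*η*N^2 := by ring
  have h2 : |(x*R2 - y*R1)*c| ≤ m/2*N^2 := by
    have h4 : m/2*N^2 = (2*η*N^2) * |c| + 2*η*N^2 := by
      rw [← heq]; ring
    calc |(x*R2 - y*R1)*c| = |x*R2 - y*R1| * |c| := abs_mul _ _
      _ ≤ (2*η*N^2) * |c| := mul_le_mul_of_nonneg_right hsub2 (abs_nonneg c)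
      _ ≤ m/2*N^2 := by
          rw [h4]
          nlinarith [mul_pos hη0 (mul_pos hN0 hN0)]
  have hfin : 0 < m/2*N^2 := by positivity
  have h5 := abs_le.1 h2
  clear_value A a b c d x y N R1 R2
  linarith [hQ, h1, h5.1]

lemma cross2_smul (s : ℝ) (u v : ℝ × ℝ) : cross2 (s • u) v = s * cross2 u v := by
  simp only [cross2, Prod.smul_fst, Prod.smul_snd, smul_eq_mul]
  ring

set_option maxHeartbeats 1600000 in
/-- Two nondegenerate singularities `p ≠ q` of a planar `C¹` vector field,
joined by a segment without contact (the scalar product of `X` with a unit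
normal `n` of the line through `p` and `q` does not vanish on the open
segment), must be surrounded by closed orbits of opposite orientations: if
the small closed orbits around `p` are counterclockwise, then the small
closed orbits around `q` are clockwise. -/
theorem stmt19 (X : ℝ × ℝ → ℝ × ℝ) (hX : ContDiff ℝ 1 X)
    (p q : ℝ × ℝ) (hpq : p ≠ q)
    (hXp : X p = 0) (hXq : X q = 0)
    (hdp : 0 < jacDet2 X p) (hdq : 0 < jacDet2 X q)
    (n : ℝ × ℝ) (hn : n.1 ^ 2 + n.2 ^ 2 = 1)
    (hperp : (q.1 - p.1) * n.1 + (q.2 - p.2) * n.2 = 0)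
    (hnc : ∀ s : ℝ, s ∈ Set.Ioo (0 : ℝ) 1 →
      (X (p + s • (q - p))).1 * n.1 + (X (p + s • (q - p))).2 * n.2 ≠ 0)
    -- closed orbits surround `p` counterclockwise in a punctured neighborhood of `p`
    (hp : ∀ ε > (0 : ℝ), ∃ (γ : ℝ → ℝ × ℝ) (T : ℝ),
      IsPeriodicOrbit X γ T ∧ Set.range γ ⊆ Metric.ball p ε \ {p} ∧
      ∀ t : ℝ, 0 < cross2 (γ t - p) (X (γ t)))
    -- closed orbits surround `q` in a punctured neighborhood of `q`
    (hq : ∀ ε > (0 : ℝ), ∃ (γ : ℝ → ℝ × ℝ) (T : ℝ),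
      IsPeriodicOrbit X γ T ∧ Set.range γ ⊆ Metric.ball q ε \ {q} ∧
      ∀ t : ℝ, cross2 (γ t - q) (X (γ t)) ≠ 0) :
    -- then all sufficiently small closed orbits around `q` are clockwise
    ∃ ε₀ > (0 : ℝ), ∀ (γ : ℝ → ℝ × ℝ) (T : ℝ),
      IsPeriodicOrbit X γ T → Set.range γ ⊆ Metric.ball q ε₀ \ {q} →
      ∀ t : ℝ, cross2 (γ t - q) (X (γ t)) < 0 := by
  -- the traces at `p` and `q` must vanish, else no periodic orbits nearby
  by_cases hτq : (fderiv ℝ X q (1,0)).1 + (fderiv ℝ X q (0,1)).2 = 0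
  swap
  · obtain ⟨ε, hε, H⟩ := no_periodic X hX q hXq hdq hτq
    obtain ⟨γ, T, hOrb, hsub, -⟩ := hq ε hε
    exact absurd hsub (H γ T hOrb)
  by_cases hτp : (fderiv ℝ X p (1,0)).1 + (fderiv ℝ X p (0,1)).2 = 0
  swap
  · obtain ⟨ε, hε, H⟩ := no_periodic X hX p hXp hdp hτp
    obtain ⟨γ, T, hOrb, hsub, -⟩ := hp ε hε
    exact absurd hsub (H γ T hOrb)
  -- local sign near p and q
  obtain ⟨δp, hδp, Hp⟩ := local_sign X hX p hXp hdp hτp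
  obtain ⟨δq, hδq, Hq⟩ := local_sign X hX q hXq hdq hτq
  -- the coefficient at p is positive, thanks to the ccw orbits
  obtain ⟨γ, T, hOrb, hsub, hccw⟩ := hp δp hδp
  have hw0 : γ 0 ∈ Metric.ball p δp \ {p} := hsub (Set.mem_range_self 0)
  have h1 := Hp (γ 0) (Metric.mem_ball.1 hw0.1) (by simpa using hw0.2)
  have hcp : 0 < (fderiv ℝ X p (1,0)).2 := by nlinarith [hccw 0]
  have hply : ∀ w : ℝ × ℝ, dist w p < δp → w ≠ p → 0 < cross2 (w - p) (X w) := by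
    intro w hd1 hd2
    nlinarith [Hp w hd1 hd2]
  -- segment geometry
  set u := q - p with hu
  have hu0 : u ≠ 0 := sub_ne_zero.2 (Ne.symm hpq)
  have hunorm : 0 < ‖u‖ := norm_pos_iff.2 hu0
  have hE0 : 0 < u.1^2 + u.2^2 := by
    by_contra hcon
    push_neg at hcon
    have e1 : u.1 = 0 := by nlinarith [sq_nonneg u.1, sq_nonneg u.2]
    have e2 : u.2 = 0 := by nlinarith [sq_nonneg u.1, sq_nonneg u.2]
    exact hu0 (Prod.ext e1 e2)
  have hperp' : u.1 * n.1 + u.2 * n.2 = 0 := by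
    simpa [hu] using hperp
  set tc := (n.2*u.1 - n.1*u.2)/(u.1^2 + u.2^2) with htc
  have hn1 : n.1 = -u.2 * tc := by
    rw [htc]
    field_simp
    linear_combination u.1 * hperp'
  have hn2 : n.2 = u.1 * tc := by
    rw [htc]
    field_simp
    linear_combination u.2 * hperp'
  have htc0 : tc ≠ 0 := by
    intro hzero
    rw [hn1, hn2, hzero] at hn
    norm_num at hn
  -- the transversality function on the segment
  set F : ℝ → ℝ := fun s => cross2 u (X (p + s • u)) with hF
  have hcont : Continuous F := by
    have hXc : Continuous X := hX.continuous
    have hpath : Continuous fun s : ℝ => p + s • u :=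
      continuous_const.add (continuous_id.smul continuous_const)
    exact (continuous_const.mul ((hXc.comp hpath).snd)).sub
      (continuous_const.mul ((hXc.comp hpath).fst))
  have hnz : ∀ s ∈ Set.Ioo (0:ℝ) 1, F s ≠ 0 := by
    intro s hs hzero
    apply hnc s hs
    have e : (X (p + s • u)).1 * n.1 + (X (p + s • u)).2 * n.2 = tc * F s := by
      rw [hn1, hn2]
      simp only [hF, cross2]
      ring
    rw [e, hzero, mul_zero]
  -- a point on the segment near p
  have hsegdist : ∀ s : ℝ, 0 ≤ s → dist (p + s • u) p = s * ‖u‖ := by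
    intro s hs
    rw [dist_eq_norm]
    have e : p + s • u - p = s • u := by abel
    rw [e, norm_smul, Real.norm_eq_abs, abs_of_nonneg hs]
  have hsegne : ∀ s : ℝ, s ≠ 0 → p + s • u ≠ p := by
    intro s hs hcon
    have : s • u = 0 := by
      have := sub_eq_zero.2 hcon
      simpa using this
    rcases smul_eq_zero.1 this with h' | h'
    · exact hs h'
    · exact hu0 h'
  set s1 := min (1/2 : ℝ) (δp/(2*‖u‖)) with hs1
  have hs1pos : 0 < s1 := lt_min (by norm_num) (by positivity)
  have hs1lt1 : s1 < 1 := lt_of_le_of_lt (min_le_left _ _) (by norm_num)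
  have hs1d : s1 * ‖u‖ < δp := by
    have h2 : s1 * ‖u‖ ≤ (δp/(2*‖u‖)) * ‖u‖ :=
      mul_le_mul_of_nonneg_right (min_le_right _ _) hunorm.le
    have h3 : (δp/(2*‖u‖)) * ‖u‖ = δp/2 := by field_simp
    rw [h3] at h2
    linarith
  have hFs1 : 0 < F s1 := by
    have hd1 : dist (p + s1 • u) p < δp := by
      rw [hsegdist s1 hs1pos.le]; exact hs1d
    have hcc := hply (p + s1 • u) hd1 (hsegne s1 hs1pos.ne')
    have e : cross2 (p + s1 • u - p) (X (p + s1 • u)) = s1 * F s1 := by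
      have e2 : p + s1 • u - p = s1 • u := by abel
      rw [e2, cross2_smul]
    rw [e] at hcc
    nlinarith
  -- F is positive on the whole open segment
  have hFpos : ∀ s ∈ Set.Ioo (0:ℝ) 1, 0 < F s := by
    intro s hs
    rcases lt_trichotomy (F s) 0 with hneg | h0 | hposs
    · exfalso
      have hs1mem : s1 ∈ Set.Ioo (0:ℝ) 1 := ⟨hs1pos, hs1lt1⟩
      rcases le_or_gt s s1 with hle | hlt
      · have hiv := intermediate_value_Icc hle (hcont.continuousOn)
        have : (0:ℝ) ∈ Set.Icc (F s) (F s1) := ⟨hneg.le, hFs1.le⟩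
        obtain ⟨x, hx, hx0⟩ := hiv this
        have hxm : x ∈ Set.Ioo (0:ℝ) 1 := ⟨lt_of_lt_of_le hs.1 hx.1, lt_of_le_of_lt hx.2 hs1lt1⟩
        exact hnz x hxm hx0
      · have hiv := intermediate_value_Icc' hlt.le (hcont.continuousOn)
        have : (0:ℝ) ∈ Set.Icc (F s) (F s1) := ⟨hneg.le, hFs1.le⟩
        obtain ⟨x, hx, hx0⟩ := hiv this
        have hxm : x ∈ Set.Ioo (0:ℝ) 1 := ⟨lt_of_lt_of_le hs1pos hx.1, lt_of_le_of_lt hx.2 hs.2⟩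
        exact hnz x hxm hx0
    · exact absurd h0 (hnz s hs)
    · exact hposs
  -- a point on the segment near q shows the coefficient at q is negative
  set s2 := max (1/2 : ℝ) (1 - δq/(2*‖u‖)) with hs2
  have hs2lt1 : s2 < 1 := by
    apply max_lt (by norm_num)
    have : 0 < δq/(2*‖u‖) := by positivity
    linarith
  have hs2pos : 0 < s2 := lt_of_lt_of_le (by norm_num) (le_max_left _ _)
  have hw2q : p + s2 • u - q = (s2 - 1) • u := by
    have : q = p + (1:ℝ) • u := by rw [hu]; simp
    rw [this]
    ext <;> (simp [Prod.smul_fst, Prod.smul_snd]; ring)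
  have hd2 : dist (p + s2 • u) q < δq := by
    rw [dist_eq_norm, hw2q, norm_smul, Real.norm_eq_abs, abs_of_neg (by linarith : s2 - 1 < 0)]
    have h2 : (1 - s2) ≤ δq/(2*‖u‖) := by
      have := le_max_right (1/2 : ℝ) (1 - δq/(2*‖u‖))
      linarith
    have h3 : (1 - s2) * ‖u‖ ≤ (δq/(2*‖u‖)) * ‖u‖ :=
      mul_le_mul_of_nonneg_right h2 hunorm.le
    have h4 : (δq/(2*‖u‖)) * ‖u‖ = δq/2 := by field_simp
    rw [h4] at h3
    calc -(s2 - 1) * ‖u‖ = (1 - s2) * ‖u‖ := by ring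
      _ ≤ δq/2 := h3
      _ < δq := by linarith
  have hne2 : p + s2 • u ≠ q := by
    intro hcon
    have h0 : (s2 - 1) • u = 0 := by rw [← hw2q, hcon]; simp
    rcases smul_eq_zero.1 h0 with h' | h'
    · linarith [hs2lt1, sub_eq_zero.1 h']
    · exact hu0 h'
  have hcrossq : cross2 (p + s2 • u - q) (X (p + s2 • u)) = (s2 - 1) * F s2 := by
    rw [hw2q, cross2_smul]
  have hcneg : cross2 (p + s2 • u - q) (X (p + s2 • u)) < 0 := by
    rw [hcrossq]
    have := hFpos s2 ⟨hs2pos, hs2lt1⟩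
    nlinarith
  have hq1 := Hq (p + s2 • u) hd2 hne2
  have hcq : (fderiv ℝ X q (1,0)).2 < 0 := by nlinarith
  -- conclusion
  refine ⟨δq, hδq, ?_⟩
  intro γ' T' _ hsub' t
  have hm := hsub' (Set.mem_range_self t)
  have hq2 := Hq (γ' t) (Metric.mem_ball.1 hm.1) (by simpa using hm.2)
  nlinarith
end
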